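/- Let c ≥ 1 be an integer and let (r_i) satisfy r_0 > 0 and r_{i+1} = (1+1/c)·r_i + (2+1/c)·r_{⌊i/c⌋·c} (i.e. the recurrence with t = 4c). Then r_c = [(1+1/c)^c·(2c+2) - (2c+1)]·r_0 > c·r_0. -/

import Mathlib

/-- For `c ≥ 1` and a sequence with `r_0 > 0` satisfying
`r_{i+1} = (1+1/c)·r_i + (2+1/c)·r_{⌊i/c⌋·c}`, one has
`r_c = [(1+1/c)^c·(2c+2) - (2c+1)]·r_0 > c·r_0`. -/
theorem stmt_12 (c : ℕ) (hc : 1 ≤ c) (r : ℕ → ℝ) (hr0 : 0 < r 0)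
    (hrec : ∀ i : ℕ, r (i + 1)
        = (1 + 1 / (c : ℝ)) * r i + (2 + 1 / (c : ℝ)) * r (i / c * c)) :
    r c = ((1 + 1 / (c : ℝ)) ^ c * (2 * c + 2) - (2 * c + 1)) * r 0 ∧
      (c : ℝ) * r 0 < r c := by
  have hcpos : (0 : ℝ) < c := by exact_mod_cast hc
  have hcne : (c : ℝ) ≠ 0 := ne_of_gt hcpos
  have key : ∀ i, i ≤ c →
      r i = ((1 + 1 / (c : ℝ)) ^ i * (2 * c + 2) - (2 * c + 1)) * r 0 := by
    intro i
    induction i with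
    | zero => intro _; simp; ring
    | succ n ih =>
      intro hn
      have hnc : n < c := hn
      have hdiv : n / c = 0 := Nat.div_eq_of_lt hnc
      have := hrec n
      rw [hdiv] at this
      simp only [Nat.zero_mul] at this
      rw [this, ih (le_of_lt hnc)]
      field_simp
      rw [pow_succ]
      generalize ((↑c + 1) / (c:ℝ)) ^ n = X
      field_simp
      ring
  have h1 := key c le_rfl
  refine ⟨h1, ?_⟩
  have hpow : (2 : ℝ) ≤ (1 + 1 / (c : ℝ)) ^ c := by
    have := one_add_mul_le_pow (a := 1 / (c : ℝ)) (by nlinarith [one_div_pos.mpr hcpos]) c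
    calc (2 : ℝ) = 1 + c * (1 / c) := by rw [mul_one_div, div_self hcne]; norm_num
    _ ≤ (1 + 1 / c) ^ c := this
  rw [h1]
  have : (c : ℝ) < (1 + 1 / (c : ℝ)) ^ c * (2 * c + 2) - (2 * c + 1) := by
    nlinarith [hcpos]
  nlinarith [hr0]
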